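/- Let G be a connected graph of order n ≥ 3 and X ⊆ V(G). Then γ_P(G;X) ≤ ⌊(n + 2|X|)/3⌋. -/

import Mathlib

namespace RPD

variable {V : Type*}

/-- The closed neighborhood of a set of vertices. -/
def closedNbhd (G : SimpleGraph V) (S : Set V) : Set V :=
  S ∪ {v | ∃ u ∈ S, G.Adj u v}

/-- The zero forcing closure: `ZFC G B v` means `v` eventually gets colored when
starting from the blue set `B` and repeatedly applying the color change rule
(a colored vertex with exactly one uncolored neighbor colors that neighbor). -/
inductive ZFC (G : SimpleGraph V) (B : Set V) : V → Prop
  | init (v : V) (hv : v ∈ B) : ZFC G B v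
  | force (u w : V) (hu : ZFC G B u) (hadj : G.Adj u w)
      (hothers : ∀ x, G.Adj u x → x ≠ w → ZFC G B x) : ZFC G B w

/-- `B` is a zero forcing set of `G`. -/
def IsZFS (G : SimpleGraph V) (B : Set V) : Prop := ∀ v, ZFC G B v

/-- `S` is a power dominating set of `G`: its closed neighborhood is a zero forcing set. -/
def IsPDS (G : SimpleGraph V) (S : Set V) : Prop := IsZFS G (closedNbhd G S)

/-- The restricted zero forcing number `Z(G;X)`; `Z(G) = zNum G ∅`. -/
noncomputable def zNum (G : SimpleGraph V) (X : Set V) : ℕ :=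
  sInf {n | ∃ B : Set V, X ⊆ B ∧ IsZFS G B ∧ B.ncard = n}

/-- The restricted power domination number `γ_P(G;X)`; `γ_P(G) = pdNum G ∅`. -/
noncomputable def pdNum (G : SimpleGraph V) (X : Set V) : ℕ :=
  sInf {n | ∃ S : Set V, X ⊆ S ∧ IsPDS G S ∧ S.ncard = n}

/-- A leaf is a vertex of degree one, i.e. whose neighbor set is a singleton. -/
def IsLeaf (G : SimpleGraph V) (l : V) : Prop := ∃ u, G.neighborSet l = {u}

end RPD

namespace Aux
open RPD
variable {V : Type*} {G : SimpleGraph V}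

/-- Region-restricted zero forcing: forcers must lie in `W`. -/
inductive ZFCIn (G : SimpleGraph V) (W B : Set V) : V → Prop
  | init (v : V) (hv : v ∈ B) : ZFCIn G W B v
  | force (u w : V) (hu : ZFCIn G W B u) (huW : u ∈ W) (hadj : G.Adj u w)
      (hothers : ∀ x, G.Adj u x → x ≠ w → ZFCIn G W B x) : ZFCIn G W B w

lemma ZFCIn.mono {W W' B B' : Set V} (hW : W ⊆ W') (hB : B ⊆ B') {v : V}
    (h : ZFCIn G W B v) : ZFCIn G W' B' v := by
  induction h with
  | init v hv => exact .init v (hB hv)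
  | force u w hu huW hadj hothers ihu iho =>
    exact .force u w ihu (hW huW) hadj (fun x hx hxw => iho x hx hxw)

lemma ZFCIn.toZFC {W B : Set V} {v : V} (h : ZFCIn G W B v) : ZFC G B v := by
  induction h with
  | init v hv => exact .init v hv
  | force u w hu huW hadj hothers ihu iho => exact .force u w ihu hadj iho

lemma ZFCIn.closure {W B₁ B₂ : Set V} (h₂ : ∀ b ∈ B₂, ZFCIn G W B₁ b) {v : V}
    (h : ZFCIn G W B₂ v) : ZFCIn G W B₁ v := by
  induction h with
  | init v hv => exact h₂ v hv
  | force u w hu huW hadj hothers ihu iho => exact .force u w ihu huW hadj iho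

lemma ZFCIn.transfer {C W B₂ B : Set V} (hCW : C ⊆ W)
    (hbnd : ∀ u ∈ C, ∀ x, G.Adj u x → x ∉ C → ZFCIn G W B x)
    (hinit : ∀ x ∈ B₂, x ∈ C → ZFCIn G W B x) {v : V}
    (h : ZFCIn G C B₂ v) (hv : v ∈ C) : ZFCIn G W B v := by
  induction h with
  | init v hv' => exact hinit v hv' hv
  | force u w hu huC hadj hothers ihu iho =>
    refine .force u w (ihu huC) (hCW huC) hadj (fun x hx hxw => ?_)
    by_cases hxC : x ∈ C
    · exact iho x hx hxw hxC
    · exact hbnd u huC x hx hxC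

/-- Reachability within a region `W`. -/
inductive Reach (G : SimpleGraph V) (W : Set V) (u : V) : V → Prop
  | refl (hu : u ∈ W) : Reach G W u u
  | tail {v x : V} (h : Reach G W u v) (hadj : G.Adj v x) (hx : x ∈ W) : Reach G W u x

lemma Reach.mem_left {W : Set V} {u v : V} (h : Reach G W u v) : u ∈ W := by
  induction h with
  | refl hu => exact hu
  | tail h hadj hx ih => exact ih

lemma Reach.mem_right {W : Set V} {u v : V} (h : Reach G W u v) : v ∈ W := by
  induction h with
  | refl hu => exact hu
  | tail h hadj hx ih => exact hx

lemma Reach.trans {W : Set V} {u v x : V} (h : Reach G W u v) (h' : Reach G W v x) :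
    Reach G W u x := by
  induction h' with
  | refl hu => exact h
  | tail h' hadj hx ih => exact .tail ih hadj hx

lemma Reach.symm {W : Set V} {u v : V} (h : Reach G W u v) : Reach G W v u := by
  induction h with
  | refl hu => exact .refl hu
  | tail h hadj hx ih => exact Reach.trans (.tail (.refl hx) hadj.symm h.mem_right) ih

/-- The connected component of `w` inside region `W`. -/
def comp (G : SimpleGraph V) (W : Set V) (w : V) : Set V := {u | Reach G W w u}

lemma comp_subset {W : Set V} {w : V} : comp G W w ⊆ W := fun _ h => Reach.mem_right h

lemma mem_comp_self {W : Set V} {w : V} (hw : w ∈ W) : w ∈ comp G W w := .refl hw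

lemma comp_closed {W : Set V} {w u x : V} (hu : u ∈ comp G W w) (hadj : G.Adj u x)
    (hx : x ∈ W) : x ∈ comp G W w := Reach.tail hu hadj hx

lemma comp_eq_of_mem {W : Set V} {w u : V} (hu : u ∈ comp G W w) :
    comp G W u = comp G W w := by
  ext x
  exact ⟨fun hx => Reach.trans hu hx, fun hx => Reach.trans (Reach.symm hu) hx⟩

def ConnIn (G : SimpleGraph V) (W : Set V) : Prop := ∀ u ∈ W, ∀ v ∈ W, Reach G W u v

lemma reach_comp {W : Set V} {w u : V} (h : Reach G W w u) :
    Reach G (comp G W w) w u := by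
  induction h with
  | refl hu => exact .refl (mem_comp_self hu)
  | tail h hadj hx ih => exact .tail ih hadj (Reach.tail h hadj hx)

lemma connIn_comp {W : Set V} {w : V} : ConnIn G (comp G W w) := by
  intro u hu v hv
  exact Reach.trans (Reach.symm (reach_comp hu)) (reach_comp hv)

/-- Every component of `W \ X` has a vertex adjacent to `X`. -/
lemma comp_touch {W X : Set V} (hconn : ConnIn G W) (hXW : X ⊆ W) {x₀ : V} (hx₀ : x₀ ∈ X)
    {u : V} (hu : u ∈ W \ X) :
    ∃ z ∈ comp G (W \ X) u, ∃ x ∈ X, G.Adj z x := by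
  have key : ∀ v : V, Reach G W u v →
      Reach G (W \ X) u v ∨ ∃ z ∈ comp G (W \ X) u, ∃ x ∈ X, G.Adj z x := by
    intro v hv
    induction hv with
    | refl => exact Or.inl (.refl hu)
    | @tail v' x' h hadj hx ih =>
      rcases ih with ih | ih
      · by_cases hxX : x' ∈ X
        · exact Or.inr ⟨v', ih, x', hxX, hadj⟩
        · exact Or.inl (.tail ih hadj ⟨hx, hxX⟩)
      · exact Or.inr ih
  rcases key x₀ (hconn u hu.1 x₀ (hXW hx₀)) with h | h
  · exact absurd h.mem_right (fun hh => hh.2 hx₀)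
  · exact h

lemma closedNbhd_mono {S T : Set V} (h : S ⊆ T) : closedNbhd G S ⊆ closedNbhd G T := by
  rintro v (hv | ⟨u, hu, hadj⟩)
  · exact Or.inl (h hv)
  · exact Or.inr ⟨u, h hu, hadj⟩

lemma mem_closedNbhd_self {S : Set V} {s : V} (hs : s ∈ S) : s ∈ closedNbhd G S :=
  Or.inl hs

lemma mem_closedNbhd_adj {S : Set V} {s v : V} (hs : s ∈ S) (h : G.Adj s v) :
    v ∈ closedNbhd G S := Or.inr ⟨s, hs, h⟩

lemma adj_of_pair_conn {a b : V} (hne : a ≠ b) (hconn : ConnIn G ({a, b} : Set V)) :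
    G.Adj a b := by
  have ha : a ∈ ({a, b} : Set V) := Set.mem_insert _ _
  have hb : b ∈ ({a, b} : Set V) := Set.mem_insert_iff.2 (Or.inr rfl)
  have key : ∀ v, Reach G ({a, b} : Set V) a v → v = a ∨ G.Adj a v := by
    intro v hv
    induction hv with
    | refl => exact Or.inl rfl
    | @tail v' x' h hadj hx ih =>
      rcases Set.mem_insert_iff.1 hx with h1 | h1
      · exact Or.inl h1
      · have h1 : x' = b := by simpa using h1
        subst h1
        rcases ih with h2 | h2
        · subst h2; exact Or.inr hadj
        · rcases Set.mem_insert_iff.1 h.mem_right with h3 | h3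
          · exact absurd (h3 ▸ h2) (G.irrefl)
          · have h3 : v' = x' := by simpa using h3
            exact absurd (h3 ▸ hadj) (G.irrefl)
  rcases key b (hconn a ha b hb) with rfl | h
  · exact absurd rfl hne
  · exact h

/-- A two-element component consists of two adjacent vertices. -/
lemma comp_pair {W : Set V} {w : V} (h2 : (comp G W w).ncard = 2) :
    ∃ a b, a ≠ b ∧ comp G W w = {a, b} ∧ G.Adj a b := by
  obtain ⟨a, b, hne, hab⟩ := Set.ncard_eq_two.1 h2
  refine ⟨a, b, hne, hab, ?_⟩
  have hconn : ConnIn G (comp G W w) := connIn_comp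
  rw [hab] at hconn
  exact adj_of_pair_conn hne hconn

lemma sum_ncard_le_of_disjoint {D : Set V} (hD : D.Finite) :
    ∀ (t : Finset (Set V)), (∀ C ∈ t, C ⊆ D) →
      (∀ C ∈ t, ∀ C' ∈ t, C ≠ C' → Disjoint C C') →
      (∑ C ∈ t, C.ncard) ≤ D.ncard := by
  classical
  intro t
  induction t using Finset.induction generalizing D with
  | empty => intro _ _; simp
  | @insert C t hCt ih =>
    intro hsub hdisj
    rw [Finset.sum_insert hCt]
    have hCD : C ⊆ D := hsub C (Finset.mem_insert_self _ _)
    have h1 : (∑ C' ∈ t, C'.ncard) ≤ (D \ C).ncard := by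
      refine ih (hD.diff (t := C)) (fun C' hC' => ?_) (fun C' hC' C'' hC'' h => ?_)
      · intro x hx
        refine ⟨hsub C' (Finset.mem_insert_of_mem hC') hx, fun hxC => ?_⟩
        have hne : C ≠ C' := fun h => hCt (h ▸ hC')
        exact (hdisj C (Finset.mem_insert_self _ _) C' (Finset.mem_insert_of_mem hC')
          hne).le_bot ⟨hxC, hx⟩
      · exact hdisj C' (Finset.mem_insert_of_mem hC') C'' (Finset.mem_insert_of_mem hC'') h
    have := Set.ncard_diff_add_ncard_of_subset hCD hD
    omega

lemma ncard_biUnion_le (t : Finset (Set V)) (f : Set V → Set V)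
    (hfin : ∀ C ∈ t, (f C).Finite) :
    (⋃ C ∈ t, f C).ncard ≤ ∑ C ∈ t, (f C).ncard := by
  classical
  induction t using Finset.induction with
  | empty => simp
  | @insert C t hCt ih =>
    rw [Finset.sum_insert hCt]
    have : (⋃ C' ∈ insert C t, f C') = f C ∪ ⋃ C' ∈ t, f C' := by
      simp [Set.biUnion_insert]
    rw [this]
    exact le_trans (Set.ncard_union_le _ _)
      (by
        have := ih (fun C' hC' => hfin C' (Finset.mem_insert_of_mem hC'))
        omega)

lemma comps_disjoint {W : Set V} {u u' x : V} (h : x ∈ comp G W u) (h' : x ∈ comp G W u') :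
    comp G W u = comp G W u' := by
  rw [← comp_eq_of_mem h, ← comp_eq_of_mem h']

variable [Fintype V]

lemma assembly {W R X S₀ : Set V}
    (hXS₀ : X ⊆ S₀) (hS₀R : S₀ ⊆ R) (hRW : R ⊆ W)
    (hcount : 3 * S₀.ncard ≤ R.ncard + 2 * X.ncard)
    (hIH : ∀ u ∈ W \ R, 3 ≤ (comp G (W \ R) u).ncard →
      ∃ T : Set V, T ⊆ comp G (W \ R) u ∧ 3 * T.ncard ≤ (comp G (W \ R) u).ncard ∧
        ∀ v ∈ comp G (W \ R) u,
          ZFCIn G (comp G (W \ R) u) ((comp G (W \ R) u)ᶜ ∪ closedNbhd G T) v)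
    (hforce0 : ∀ v ∈ R, ZFCIn G W (Wᶜ ∪ closedNbhd G S₀) v)
    (hend : ∀ v ∈ W, ZFCIn G W (Wᶜ ∪ closedNbhd G S₀ ∪ R ∪
      {u | u ∈ W \ R ∧ 3 ≤ (comp G (W \ R) u).ncard}) v) :
    ∃ S : Set V, X ⊆ S ∧ S ⊆ W ∧ 3 * S.ncard ≤ W.ncard + 2 * X.ncard ∧
      ∀ v ∈ W, ZFCIn G W (Wᶜ ∪ closedNbhd G S) v := by
  classical
  set M : Set (Set V) := {C | (∃ u ∈ W \ R, C = comp G (W \ R) u) ∧ 3 ≤ C.ncard} with hM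
  have hMfin : M.Finite := Set.toFinite _
  set t : Finset (Set V) := hMfin.toFinset with ht
  have key : ∀ C : Set V, ∃ T : Set V, (C ∈ M → T ⊆ C ∧ 3 * T.ncard ≤ C.ncard ∧
      ∀ v ∈ C, ZFCIn G C (Cᶜ ∪ closedNbhd G T) v) ∧ (C ∉ M → T = ∅) := by
    intro C
    by_cases hC : C ∈ M
    · obtain ⟨⟨u, hu, rfl⟩, h3⟩ := hC
      obtain ⟨T, hT⟩ := hIH u hu h3
      exact ⟨T, fun _ => hT, fun h => absurd ⟨⟨u, hu, rfl⟩, h3⟩ h⟩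
    · exact ⟨∅, fun h => absurd h hC, fun _ => rfl⟩
  choose F hF1 hF2 using key
  set U : Set V := ⋃ C ∈ t, F C with hU
  have hFsubU : ∀ C ∈ t, F C ⊆ U := by
    intro C hC x hx
    exact Set.mem_biUnion hC hx
  have hmemM : ∀ C ∈ t, C ∈ M := fun C hC => (Set.Finite.mem_toFinset hMfin).1 hC
  have hCsub : ∀ C ∈ M, C ⊆ W \ R := by
    rintro C ⟨⟨u, hu, rfl⟩, h3⟩
    exact comp_subset
  set S : Set V := S₀ ∪ U with hS
  have hSW : S ⊆ W := by
    rintro x (hx | hx)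
    · exact hRW (hS₀R hx)
    · simp only [hU, Set.mem_iUnion] at hx
      obtain ⟨C, hC, hx⟩ := hx
      exact (hCsub C (hmemM C hC) ((hF1 C (hmemM C hC)).1 hx)).1
  -- counting
  have hcard : 3 * S.ncard ≤ W.ncard + 2 * X.ncard := by
    have h1 : S.ncard ≤ S₀.ncard + U.ncard := Set.ncard_union_le _ _
    have h2 : U.ncard ≤ ∑ C ∈ t, (F C).ncard :=
      ncard_biUnion_le t F (fun C _ => Set.toFinite _)
    have h3 : ∑ C ∈ t, 3 * (F C).ncard ≤ ∑ C ∈ t, C.ncard :=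
      Finset.sum_le_sum (fun C hC => (hF1 C (hmemM C hC)).2.1)
    have h4 : (∑ C ∈ t, C.ncard) ≤ (W \ R).ncard := by
      refine sum_ncard_le_of_disjoint (Set.toFinite _) t
        (fun C hC => hCsub C (hmemM C hC)) ?_
      intro C hC C' hC' hne
      rw [Set.disjoint_left]
      intro x hx hx'
      obtain ⟨⟨u, hu, rfl⟩, _⟩ := hmemM C hC
      obtain ⟨⟨u', hu', rfl⟩, _⟩ := hmemM C' hC'
      exact hne (comps_disjoint hx hx')
    have h5 : (W \ R).ncard + R.ncard = W.ncard :=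
      Set.ncard_diff_add_ncard_of_subset hRW (Set.toFinite _)
    have h6 : ∑ C ∈ t, 3 * (F C).ncard = 3 * ∑ C ∈ t, (F C).ncard := by
      rw [Finset.mul_sum]
    omega
  refine ⟨S, fun x hx => Or.inl (hXS₀ hx), hSW, hcard, ?_⟩
  set B₀ : Set V := Wᶜ ∪ closedNbhd G S with hB₀
  have hN₀ : Wᶜ ∪ closedNbhd G S₀ ⊆ B₀ :=
    Set.union_subset_union_right _ (closedNbhd_mono Set.subset_union_left)
  have stage0 : ∀ v ∈ R, ZFCIn G W B₀ v := fun v hv => (hforce0 v hv).mono subset_rfl hN₀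
  have stage1 : ∀ v ∈ W \ R, 3 ≤ (comp G (W \ R) v).ncard → ZFCIn G W B₀ v := by
    intro v hv h3
    have hCM : comp G (W \ R) v ∈ M := ⟨⟨v, hv, rfl⟩, h3⟩
    have hCt : comp G (W \ R) v ∈ t := (Set.Finite.mem_toFinset hMfin).2 hCM
    obtain ⟨hTsub, _, hTforce⟩ := hF1 _ hCM
    refine ZFCIn.transfer (W := W) (B := B₀)
      (hCW := subset_trans comp_subset Set.diff_subset)
      (hbnd := ?_) (hinit := ?_) (hTforce v (mem_comp_self hv)) (mem_comp_self hv)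
    · intro u huC x hadjx hxC
      by_cases hxW : x ∈ W
      · by_cases hxR : x ∈ R
        · exact stage0 x hxR
        · exact absurd (comp_closed huC hadjx ⟨hxW, hxR⟩) hxC
      · exact .init x (Or.inl hxW)
    · rintro x (hx | hx) hxC
      · exact absurd hxC hx
      · refine .init x (Or.inr ?_)
        exact closedNbhd_mono (subset_trans (hFsubU _ hCt) Set.subset_union_right) hx
  intro v hv
  refine ZFCIn.closure ?_ (hend v hv)
  rintro b ((( hb | hb) | hb) | hb)
  · exact .init b (Or.inl hb)
  · exact .init b (hN₀ (Or.inr hb))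
  · exact stage0 b hb
  · exact stage1 b hb.1 hb.2

omit [Fintype V] in
lemma length_le_ncard {W : Set V} {p : List V} (hnd : p.Nodup) (hW : ∀ x ∈ p, x ∈ W)
    (hfin : W.Finite) : p.length ≤ W.ncard := by
  classical
  have h1 : p.toFinset.card = p.length := List.toFinset_card_of_nodup hnd
  have h2 : (p.toFinset : Set V) ⊆ W := by intro x hx; exact hW x (by simpa using hx)
  have h3 := Set.ncard_le_ncard h2 hfin
  rwa [Set.ncard_coe_finset, h1] at h3

lemma exists_longest_path {W : Set V} (hW : W.Nonempty) :
    ∃ p : List V, p ≠ [] ∧ p.Chain' G.Adj ∧ p.Nodup ∧ (∀ x ∈ p, x ∈ W) ∧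
      ∀ q : List V, q.Chain' G.Adj → q.Nodup → (∀ x ∈ q, x ∈ W) → q.length ≤ p.length := by
  classical
  set L : Set ℕ := {k | ∃ q : List V, q.Chain' G.Adj ∧ q.Nodup ∧ (∀ x ∈ q, x ∈ W) ∧
    q.length = k} with hL
  obtain ⟨w, hw⟩ := hW
  have h1L : 1 ∈ L := ⟨[w], by simp [List.Chain'], by simp, by simpa using hw, rfl⟩
  have hbdd : BddAbove L := by
    refine ⟨W.ncard, fun k hk => ?_⟩
    obtain ⟨q, _, hnd, hmem, rfl⟩ := hk
    exact length_le_ncard hnd hmem (Set.toFinite _)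
  have hSup : sSup L ∈ L := Nat.sSup_mem ⟨1, h1L⟩ hbdd
  obtain ⟨p, hchain, hnd, hmem, hlen⟩ := hSup
  refine ⟨p, ?_, hchain, hnd, hmem, fun q hq1 hq2 hq3 => ?_⟩
  · intro h
    have h1 := le_csSup hbdd h1L
    rw [← hlen, h] at h1
    simp at h1
  · have hq : q.length ∈ L := ⟨q, hq1, hq2, hq3, rfl⟩
    have := le_csSup hbdd hq
    omega

omit [Fintype V] in
/-- All members of a chain list lie in the component of its head. -/
lemma chain_subset_comp {D : Set V} : ∀ (q : List V) (a : V), (a :: q).Chain' G.Adj →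
    (∀ x ∈ a :: q, x ∈ D) → ∀ x ∈ a :: q, Reach G D a x := by
  intro q
  induction q with
  | nil =>
    intro a _ hmem x hx
    rw [List.mem_singleton] at hx
    subst hx
    exact .refl (hmem x (by simp))
  | cons b q' ih =>
    intro a hchain hmem x hx
    have hadj : G.Adj a b := (List.isChain_cons_cons.1 hchain).1
    have hchain' : (b :: q').Chain' G.Adj := (List.isChain_cons_cons.1 hchain).2
    have hmem' : ∀ x ∈ b :: q', x ∈ D := fun x hx => hmem x (List.mem_cons_of_mem _ hx)
    rcases List.mem_cons.1 hx with rfl | hx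
    · exact .refl (hmem x (by simp))
    · have hab : Reach G D a b := .tail (.refl (hmem a (by simp))) hadj (hmem' b (by simp))
      exact Reach.trans hab (ih b hchain' hmem' x hx)

/-- The small-component "free" lemma: a component of size ≤ 2 touching `N(v)` is forced. -/
lemma free_small {W R : Set V} {v : V} (hRW : R ⊆ W) {u : V} (hu : u ∈ W \ R)
    (hsmall : (comp G (W \ R) u).ncard ≤ 2)
    {z : V} (hz : z ∈ comp G (W \ R) u) (hadj : G.Adj v z)
    {E : Set V} (hE : Wᶜ ∪ closedNbhd G {v} ∪ R ⊆ E) :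
    ∀ x ∈ comp G (W \ R) u, ZFCIn G W E x := by
  have hzN : z ∈ closedNbhd G ({v} : Set V) := mem_closedNbhd_adj rfl hadj
  have hzE : ZFCIn G W E z := .init z (hE (Or.inl (Or.inr hzN)))
  have hCfin : (comp G (W \ R) u).Finite := Set.toFinite _
  have hCpos : 0 < (comp G (W \ R) u).ncard :=
    (Set.ncard_pos hCfin).2 ⟨u, mem_comp_self hu⟩
  intro x hx
  by_cases hxz : x = z
  · exact hxz ▸ hzE
  · have h2 : (comp G (W \ R) u).ncard = 2 := by
      rcases Nat.lt_or_ge (comp G (W \ R) u).ncard 2 with h1 | h2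
      · exfalso
        obtain ⟨c, hc⟩ := (Set.ncard_eq_one (s := comp G (W \ R) u)).1 (by omega)
        rw [hc] at hx hz
        exact hxz (hx.trans hz.symm)
      · omega
    obtain ⟨a, b, hne, hC, hab⟩ := comp_pair h2
    have hzx : G.Adj z x := by
      have hx' := hx; have hz' := hz
      rw [hC] at hx' hz'
      rcases hx' with rfl | rfl <;> rcases hz' with rfl | rfl
      · exact absurd rfl hxz
      · exact hab.symm
      · exact hab
      · exact absurd rfl hxz
    refine .force z x hzE (comp_subset.trans Set.diff_subset hz) hzx ?_
    intro y hy hyx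
    by_cases hyW : y ∈ W
    · by_cases hyR : y ∈ R
      · exact .init y (hE (Or.inr hyR))
      · have hyC : y ∈ comp G (W \ R) u := comp_closed hz hy ⟨hyW, hyR⟩
        exfalso
        have hy' := hyC; have hx' := hx; have hz' := hz
        rw [hC] at hy' hx' hz'
        rcases hz' with rfl | rfl
        · rcases hy' with h | h
          · exact G.irrefl (h ▸ hy)
          · rcases hx' with h' | h'
            · exact hxz h'
            · exact hyx (h.trans h'.symm)
        · rcases hy' with h | h
          · rcases hx' with h' | h'
            · exact hyx (h.trans h'.symm)
            · exact hxz h'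
          · exact G.irrefl (h ▸ hy)
    · exact .init y (hE (Or.inl (Or.inl hyW)))

omit [Fintype V] in
lemma U2sat {W A : Set V} {w₀ w₁ : V} {z z' : V}
    (hz : z ∈ {t | t ∈ W \ A ∧ ((comp G (W \ A) t).ncard ≤ 2 ∧
      ∀ y ∈ comp G (W \ A) t, ¬ G.Adj w₁ y) ∧ ∀ y ∈ comp G (W \ A) t, ¬ G.Adj w₀ y})
    (hz' : z' ∈ comp G (W \ A) z) :
    z' ∈ {t | t ∈ W \ A ∧ ((comp G (W \ A) t).ncard ≤ 2 ∧
      ∀ y ∈ comp G (W \ A) t, ¬ G.Adj w₁ y) ∧ ∀ y ∈ comp G (W \ A) t, ¬ G.Adj w₀ y} := by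
  obtain ⟨hzWA, hb, hn⟩ := hz
  have he : comp G (W \ A) z' = comp G (W \ A) z := comp_eq_of_mem hz'
  exact ⟨comp_subset hz', by rw [he]; exact hb, by rw [he]; exact hn⟩

omit [Fintype V] in
lemma comp_pair_mem {D : Set V} {w z u : V} (h2 : (comp G D w).ncard = 2)
    (hz : z ∈ comp G D w) (hu : u ∈ comp G D w) (hne : z ≠ u) :
    G.Adj z u ∧ comp G D w = {z, u} := by
  obtain ⟨a, b, hab_ne, hC, hab⟩ := comp_pair h2
  rw [hC] at hz hu
  rcases hz with h1 | h1 <;> rcases hu with h2' | h2'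
  · exact absurd (h1.trans h2'.symm) hne
  · refine ⟨by rw [h1, h2']; exact hab, by rw [← h1, ← h2'] at hC; exact hC⟩
  · refine ⟨by rw [h1, h2']; exact hab.symm, ?_⟩
    rw [← h1, ← h2'] at hC
    exact hC.trans (Set.pair_comm u z)
  · exact absurd (h1.trans h2'.symm) hne

/-- The selection step for the unrestricted case (to be proven). -/
lemma selection {W : Set V} (hconn : ConnIn G W) (h3 : 3 ≤ W.ncard) :
    ∃ (v : V) (R : Set V), v ∈ R ∧ R ⊆ W ∧ 3 ≤ R.ncard ∧
      (∀ u ∈ R, ZFCIn G W (Wᶜ ∪ closedNbhd G {v}) u) ∧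
      (∀ u ∈ W, ZFCIn G W (Wᶜ ∪ closedNbhd G {v} ∪ R ∪
        {x | x ∈ W \ R ∧ 3 ≤ (comp G (W \ R) x).ncard}) u) := by
  classical
  have hWfin : W.Finite := Set.toFinite _
  have hWne : W.Nonempty := by
    rcases Set.eq_empty_or_nonempty W with rfl | h
    · simp at h3
    · exact h
  obtain ⟨p, hpne, hchain, hnd, hmem, hmax⟩ := exists_longest_path (G := G) hWne
  -- the path has at least 3 vertices
  have hlen3 : 3 ≤ p.length := by
    by_contra hlen
    push_neg at hlen
    have hclosed : ∀ v' ∈ p, ∀ x, G.Adj v' x → x ∈ W → x ∈ p := by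
      intro v' hv' x hadj hxW
      by_contra hxp
      have hxne : ∀ y ∈ p, x ≠ y := fun y hy h => hxp (h ▸ hy)
      match p, hpne, hlen, hv', hchain, hnd, hmem with
      | [a], _, _, hv', _, _, hmem =>
        rw [List.mem_singleton] at hv'
        subst hv'
        have := hmax [v', x] (by simp [List.Chain', hadj]) (by simp [Ne.symm (hxne v' (by simp))])
          (by intro t ht; rcases List.mem_pair.1 ht with rfl | rfl
              exacts [hmem t (by simp), hxW])
        simp at this
      | [a, b], _, _, hv', hchain, hnd, hmem =>
        have hab : G.Adj a b := by
          have := List.isChain_cons_cons.1 hchain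
          simpa using this.1
        have hne_ab : a ≠ b := by
          have := List.nodup_cons.1 hnd
          simpa using this.1
        rcases List.mem_pair.1 hv' with rfl | rfl
        · -- extend at the front
          have := hmax [x, v', b] (by simp [List.Chain', hadj.symm, hab])
            (by simp [hxne v' (by simp), hxne b (by simp), hne_ab])
            (by intro t ht
                rcases List.mem_cons.1 ht with rfl | ht
                · exact hxW
                · rcases List.mem_pair.1 ht with rfl | rfl
                  exacts [hmem t (by simp), hmem t (by simp)])
          simp at this
        · -- extend at the back
          have := hmax [a, v', x] (by simp [List.Chain', hab, hadj])
            (by simp [hne_ab, Ne.symm (hxne a (by simp)), Ne.symm (hxne v' (by simp))])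
            (by intro t ht
                rcases List.mem_cons.1 ht with rfl | ht
                · exact hmem t (by simp)
                · rcases List.mem_pair.1 ht with rfl | rfl
                  exacts [hmem t (by simp), hxW])
          simp at this
    obtain ⟨a, hap⟩ := List.exists_mem_of_ne_nil p hpne
    have hWsub : ∀ v' ∈ W, v' ∈ p := by
      intro v' hv'
      have hr : Reach G W a v' := hconn a (hmem a hap) v' hv'
      clear hv'
      induction hr with
      | refl => exact hap
      | @tail b c hr hadj hc ih => exact hclosed b ih c hadj hc
    have hcard : W.ncard ≤ p.length := by
      have h1 : W ⊆ (p.toFinset : Set V) := fun x hx => by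
        simpa using hWsub x hx
      have h2 := Set.ncard_le_ncard h1 (Set.toFinite _)
      rw [Set.ncard_coe_finset] at h2
      exact h2.trans (by simpa using List.toFinset_card_le p)
    omega
  obtain ⟨w₀, q₀, rfl⟩ := List.exists_cons_of_ne_nil hpne
  obtain ⟨w₁, q₁, rfl⟩ := List.exists_cons_of_ne_nil
    (show q₀ ≠ [] by rintro rfl; simp at hlen3)
  obtain ⟨w₂, rest, rfl⟩ := List.exists_cons_of_ne_nil
    (show q₁ ≠ [] by rintro rfl; simp at hlen3)
  have hadj01 : G.Adj w₀ w₁ := (List.isChain_cons_cons.1 hchain).1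
  have hchain1 : (w₁ :: w₂ :: rest).Chain' G.Adj := (List.isChain_cons_cons.1 hchain).2
  have hadj12 : G.Adj w₁ w₂ := (List.isChain_cons_cons.1 hchain1).1
  have hchain2 : (w₂ :: rest).Chain' G.Adj := (List.isChain_cons_cons.1 hchain1).2
  have hw₀ : w₀ ∈ W := hmem w₀ (by simp)
  have hw₁ : w₁ ∈ W := hmem w₁ (by simp)
  have hw₂ : w₂ ∈ W := hmem w₂ (by simp)
  have hnd0 := List.nodup_cons.1 hnd
  have hnd1 := List.nodup_cons.1 hnd0.2
  have hnd2 := List.nodup_cons.1 hnd1.2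
  have ne01 : w₀ ≠ w₁ := fun h => hnd0.1 (h ▸ (by simp))
  have ne02 : w₀ ≠ w₂ := fun h => hnd0.1 (h ▸ (by simp))
  have ne12 : w₁ ≠ w₂ := fun h => hnd1.1 (h ▸ (by simp))
  have hw0rest : w₀ ∉ rest := fun h => hnd0.1 (by simp [h])
  have hw1rest : w₁ ∉ rest := fun h => hnd1.1 (by simp [h])
  have hw2rest : w₂ ∉ rest := hnd2.1
  set A : Set V := {w₀, w₁, w₂} with hA
  have hAW : A ⊆ W := by
    rintro x (rfl | rfl | rfl)
    exacts [hw₀, hw₁, hw₂]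
  have hw₀A : w₀ ∈ A := by simp [hA]
  have hw₁A : w₁ ∈ A := by simp [hA]
  have hw₂A : w₂ ∈ A := by simp [hA]
  have hAcard : A.ncard = 3 := by
    rw [hA, Set.ncard_insert_of_notMem (by simp [ne01, ne02]) (Set.toFinite _),
      Set.ncard_insert_of_notMem (by simp [ne12]) (Set.toFinite _), Set.ncard_singleton]
  have hfront : ∀ y, G.Adj y w₀ → y ∈ W → y ∈ w₀ :: w₁ :: w₂ :: rest := by
    intro y hadj hyW
    by_contra hyp
    have := hmax (y :: w₀ :: w₁ :: w₂ :: rest) (List.isChain_cons_cons.2 ⟨hadj, hchain⟩)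
      (List.nodup_cons.2 ⟨hyp, hnd⟩)
      (by intro t ht
          rcases List.mem_cons.1 ht with rfl | ht
          exacts [hyW, hmem t ht])
    simp at this
  have hforceA : ∀ u ∈ A, ZFCIn G W (Wᶜ ∪ closedNbhd G {w₁}) u := by
    rintro u (rfl | rfl | rfl)
    · exact .init u (Or.inr (mem_closedNbhd_adj rfl hadj01.symm))
    · exact .init u (Or.inr (mem_closedNbhd_self rfl))
    · exact .init u (Or.inr (mem_closedNbhd_adj rfl hadj12))
  cases rest with
  | nil =>
    -- the path is w₀ w₁ w₂ and is maximal at both ends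
    refine ⟨w₁, A, hw₁A, hAW, by omega, hforceA, ?_⟩
    intro u huW
    set B : Set V := Wᶜ ∪ closedNbhd G {w₁} ∪ A ∪
      {x | x ∈ W \ A ∧ 3 ≤ (comp G (W \ A) x).ncard} with hB
    by_cases huA : u ∈ A
    · exact .init u (Or.inl (Or.inr huA))
    · have hu' : u ∈ W \ A := ⟨huW, huA⟩
      by_cases hbig : 3 ≤ (comp G (W \ A) u).ncard
      · exact .init u (Or.inr ⟨hu', hbig⟩)
      · obtain ⟨z, hzC, x, hxA, hadjzx⟩ := comp_touch hconn hAW hw₀A hu'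
        have hzW : z ∈ W := (comp_subset.trans Set.diff_subset) hzC
        have hzA : z ∉ A := fun h => (comp_subset hzC).2 h
        rcases hxA with h | h | h
        · -- adjacent to w₀ : impossible
          rw [h] at hadjzx
          exact absurd (by
            have := hfront z hadjzx hzW
            simpa [hA] using this) hzA
        · -- adjacent to w₁ : free
          rw [h] at hadjzx
          exact free_small hAW hu' (by omega) hzC hadjzx.symm
            (by intro t ht; exact Or.inl ht) u (mem_comp_self hu')
        · -- adjacent to w₂ : impossible by maximality at the back
          rw [h] at hadjzx
          exfalso
          have := hmax [w₀, w₁, w₂, z] (by simp [List.Chain', hadj01, hadj12, hadjzx.symm])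
            (by
              have h1 : z ≠ w₀ := fun h => hzA (h ▸ hw₀A)
              have h2 : z ≠ w₁ := fun h => hzA (h ▸ hw₁A)
              have h3 : z ≠ w₂ := fun h => hzA (h ▸ hw₂A)
              simp [ne01, ne02, ne12, Ne.symm h1, Ne.symm h2, Ne.symm h3])
            (by intro t ht
                simp only [List.mem_cons, List.not_mem_nil, or_false] at ht
                rcases ht with rfl | rfl | rfl | rfl
                exacts [hw₀, hw₁, hw₂, hzW])
          simp at this
  | cons w₃ rest₂ =>
    have hadj23 : G.Adj w₂ w₃ := (List.isChain_cons_cons.1 hchain2).1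
    have hchain3 : (w₃ :: rest₂).Chain' G.Adj := (List.isChain_cons_cons.1 hchain2).2
    have hw₃W : w₃ ∈ W := hmem w₃ (by simp)
    have hw₃A : w₃ ∉ A := by
      rintro (h | h | h)
      · exact hw0rest (by rw [h]; exact List.mem_cons_self)
      · exact hw1rest (by rw [h]; exact List.mem_cons_self)
      · exact hw2rest (by rw [h]; exact List.mem_cons_self)
    have hw₃WA : w₃ ∈ W \ A := ⟨hw₃W, hw₃A⟩
    set T : Set V := comp G (W \ A) w₃ with hTdef
    have htailmem : ∀ x ∈ w₃ :: rest₂, x ∈ W \ A := by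
      intro x hx
      refine ⟨hmem x (List.mem_cons_of_mem _ (List.mem_cons_of_mem _
        (List.mem_cons_of_mem _ hx))), ?_⟩
      rintro (h | h | h)
      · exact hw0rest (h ▸ hx)
      · exact hw1rest (h ▸ hx)
      · exact hw2rest (h ▸ hx)
    have htailT : ∀ x ∈ w₃ :: rest₂, x ∈ T :=
      fun x hx => chain_subset_comp _ w₃ hchain3 htailmem x hx
    have hTsub : T ⊆ W \ A := comp_subset
    have hw₃T : w₃ ∈ T := mem_comp_self hw₃WA
    have hfront' : ∀ y, G.Adj w₀ y → y ∈ W → y = w₁ ∨ y = w₂ ∨ y ∈ T := by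
      intro y hadj hyW
      have hy := hfront y hadj.symm hyW
      rcases List.mem_cons.1 hy with rfl | hy
      · exact absurd hadj (G.irrefl)
      rcases List.mem_cons.1 hy with rfl | hy
      · exact Or.inl rfl
      rcases List.mem_cons.1 hy with rfl | hy
      · exact Or.inr (Or.inl rfl)
      · exact Or.inr (Or.inr (htailT y hy))
    set U₂ : Set V := {t | t ∈ W \ A ∧ ((comp G (W \ A) t).ncard ≤ 2 ∧
      ∀ y ∈ comp G (W \ A) t, ¬ G.Adj w₁ y) ∧ ∀ y ∈ comp G (W \ A) t, ¬ G.Adj w₀ y}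
      with hU₂def
    by_cases hU2 : 2 ≤ U₂.ncard
    · -- CASE C2 : v = w₂, R = {w₂} ∪ U₂
      have hU2W : U₂ ⊆ W := fun t ht => (Set.diff_subset) ht.1
      have hw₂U : w₂ ∉ U₂ := fun h => h.1.2 hw₂A
      set R : Set V := insert w₂ U₂ with hR
      have hw₂R : w₂ ∈ R := Set.mem_insert _ _
      have hRW : R ⊆ W := by
        rintro t (rfl | ht)
        exacts [hw₂, hU2W ht]
      have hRcard : 3 ≤ R.ncard := by
        rw [hR, Set.ncard_insert_of_notMem hw₂U (Set.toFinite _)]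
        omega
      have hforce0 : ∀ u ∈ R, ZFCIn G W (Wᶜ ∪ closedNbhd G {w₂}) u := by
        rintro u (rfl | hu)
        · exact .init u (Or.inr (mem_closedNbhd_self rfl))
        · by_cases hadj : G.Adj w₂ u
          · exact .init u (Or.inr (mem_closedNbhd_adj rfl hadj))
          · obtain ⟨huWA, ⟨hsize, hnow₁⟩, hnow₀⟩ := hu
            obtain ⟨z, hzC, x, hxA, hadjzx⟩ := comp_touch hconn hAW hw₀A huWA
            have hzw₂ : G.Adj z w₂ := by
              rcases hxA with h | h | h
              · exact absurd (h ▸ hadjzx).symm (hnow₀ z hzC)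
              · exact absurd (h ▸ hadjzx).symm (hnow₁ z hzC)
              · exact h ▸ hadjzx
            have hzu : z ≠ u := by
              rintro rfl
              exact hadj hzw₂.symm
            have h2 : (comp G (W \ A) u).ncard = 2 := by
              have h1 : 1 < (comp G (W \ A) u).ncard :=
                Set.one_lt_ncard_iff (Set.toFinite _) |>.2 ⟨z, u, hzC, mem_comp_self huWA, hzu⟩
              omega
            obtain ⟨hadjzu, hCzu⟩ := comp_pair_mem h2 hzC (mem_comp_self huWA) hzu
            refine .force z u (.init z (Or.inr (mem_closedNbhd_adj rfl hzw₂.symm)))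
              ((comp_subset.trans Set.diff_subset) hzC) hadjzu ?_
            intro y hy hyu
            by_cases hyW : y ∈ W
            · by_cases hyA : y ∈ A
              · rcases hyA with h | h | h
                · exact absurd (h ▸ hy).symm (hnow₀ z hzC)
                · exact absurd (h ▸ hy).symm (hnow₁ z hzC)
                · exact .init y (Or.inr (h ▸ mem_closedNbhd_self rfl))
              · exfalso
                have hyC : y ∈ comp G (W \ A) u := comp_closed hzC hy ⟨hyW, hyA⟩
                rw [hCzu] at hyC
                rcases hyC with rfl | rfl
                · exact G.irrefl hy
                · exact hyu rfl
            · exact .init y (Or.inl hyW)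
      refine ⟨w₂, R, hw₂R, hRW, hRcard, hforce0, ?_⟩
      intro u huW
      by_cases huR : u ∈ R
      · exact .init u (Or.inl (Or.inr huR))
      · have hu' : u ∈ W \ R := ⟨huW, huR⟩
        by_cases hbig : 3 ≤ (comp G (W \ R) u).ncard
        · exact .init u (Or.inr ⟨hu', hbig⟩)
        · obtain ⟨z, hzC, x, hxR, hadjzx⟩ := comp_touch hconn hRW hw₂R hu'
          have hzWR : z ∈ W \ R := comp_subset hzC
          rcases hxR with h | hxU
          · -- attached to w₂ : free
            exact free_small hRW hu' (by omega) hzC (h ▸ hadjzx).symm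
              (fun t ht => Or.inl ht) u (mem_comp_self hu')
          · -- attached to U₂ : impossible
            exfalso
            have hxWA : x ∈ W \ A := hxU.1
            by_cases hzA : z ∈ A
            · rcases hzA with h | h | h
              · exact hxU.2.2 x (mem_comp_self hxWA) (h ▸ hadjzx)
              · exact hxU.2.1.2 x (mem_comp_self hxWA) (h ▸ hadjzx)
              · exact hzWR.2 (h ▸ hw₂R)
            · have hzU : z ∈ U₂ :=
                U2sat hxU (comp_closed (mem_comp_self hxWA) hadjzx.symm ⟨hzWR.1, hzA⟩)
              exact hzWR.2 (Set.mem_insert_iff.2 (Or.inr hzU))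
    · -- U₂ has at most one element
      have hU2le1 : U₂.ncard ≤ 1 := by omega
      set BA : Set V := Wᶜ ∪ closedNbhd G {w₁} ∪ A ∪
        {x | x ∈ W \ A ∧ 3 ≤ (comp G (W \ A) x).ncard} with hBA
      have hin_c : ∀ t, t ∉ W → ZFCIn G W BA t :=
        fun t ht => .init t (by rw [hBA]; exact Or.inl (Or.inl (Or.inl ht)))
      have hin_N : ∀ t, t ∈ closedNbhd G ({w₁} : Set V) → ZFCIn G W BA t :=
        fun t ht => .init t (by rw [hBA]; exact Or.inl (Or.inl (Or.inr ht)))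
      have hin_A : ∀ t, t ∈ A → ZFCIn G W BA t :=
        fun t ht => .init t (by rw [hBA]; exact Or.inl (Or.inr ht))
      have hin_big : ∀ t, t ∈ W \ A → 3 ≤ (comp G (W \ A) t).ncard → ZFCIn G W BA t :=
        fun t ht h3t => .init t (by rw [hBA]; exact Or.inr ⟨ht, h3t⟩)
      have hsubBA : Wᶜ ∪ closedNbhd G {w₁} ∪ A ⊆ BA :=
        fun t ht => by rw [hBA]; exact Or.inl ht
      -- the generic final case, given a way to color T when it is bad and w₀-attached
      have C5core : ((T.ncard ≤ 2 ∧ (∀ z ∈ T, ¬ G.Adj w₁ z) ∧ ∃ y ∈ T, G.Adj w₀ y) →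
          ∀ x ∈ T, ZFCIn G W BA x) →
          ∃ (v : V) (R : Set V), v ∈ R ∧ R ⊆ W ∧ 3 ≤ R.ncard ∧
            (∀ u ∈ R, ZFCIn G W (Wᶜ ∪ closedNbhd G {v}) u) ∧
            (∀ u ∈ W, ZFCIn G W (Wᶜ ∪ closedNbhd G {v} ∪ R ∪
              {x | x ∈ W \ R ∧ 3 ≤ (comp G (W \ R) x).ncard}) u) := by
        intro hTcl
        refine ⟨w₁, A, hw₁A, hAW, hAcard.ge, hforceA, ?_⟩
        have hhandle : ∀ u ∈ W \ A, ZFCIn G W BA u := by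
          intro u hu
          by_cases hbig : 3 ≤ (comp G (W \ A) u).ncard
          · exact hin_big u hu hbig
          by_cases htouch : ∃ z ∈ comp G (W \ A) u, G.Adj w₁ z
          · obtain ⟨z, hzC, hadjz⟩ := htouch
            exact free_small hAW hu (by omega) hzC hadjz hsubBA
              u (mem_comp_self hu)
          push_neg at htouch
          by_cases hw0e : ∃ y ∈ comp G (W \ A) u, G.Adj w₀ y
          · -- this component is T
            obtain ⟨y, hyC, hadjy⟩ := hw0e
            have hCT : comp G (W \ A) u = T := by
              rcases hfront' y hadjy ((comp_subset.trans Set.diff_subset) hyC)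
                with h | h | hyT
              · exact absurd hw₁A (h ▸ (comp_subset hyC)).2
              · exact absurd hw₂A (h ▸ (comp_subset hyC)).2
              · exact (comps_disjoint hyC hyT).trans hTdef.symm
            refine hTcl ⟨hCT ▸ (by omega), hCT ▸ htouch, y, hCT ▸ hyC, hadjy⟩
              u (hCT ▸ mem_comp_self hu)
          · -- isolated unique bad vertex, forced by w₂ at the very end
            push_neg at hw0e
            have hw0e' : ∀ y ∈ comp G (W \ A) u, ¬ G.Adj w₀ y := hw0e
            have huU : u ∈ U₂ := ⟨hu, ⟨by omega, htouch⟩, hw0e'⟩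
            have huniq : ∀ t ∈ U₂, t = u := by
              intro t ht
              by_contra hne
              have : 1 < U₂.ncard :=
                Set.one_lt_ncard_iff (Set.toFinite _) |>.2 ⟨t, u, ht, huU, hne⟩
              omega
            have hCu : comp G (W \ A) u = {u} := by
              apply Set.eq_singleton_iff_unique_mem.2 ⟨mem_comp_self hu, ?_⟩
              intro t ht
              exact huniq t (U2sat huU ht)
            obtain ⟨z, hzC, x, hxA, hadjzx⟩ := comp_touch hconn hAW hw₀A hu
            have hzu : z = u := by rw [hCu] at hzC; exact hzC
            rw [hzu] at hadjzx
            have hadjw₂ : G.Adj w₂ u := by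
              rcases hxA with h | h | h
              · exact absurd (h ▸ hadjzx).symm (hw0e' u (mem_comp_self hu))
              · exact absurd (h ▸ hadjzx).symm (htouch u (mem_comp_self hu))
              · exact (h ▸ hadjzx).symm
            refine .force w₂ u (hin_A w₂ hw₂A) hw₂ hadjw₂ ?_
            intro y hy hyu
            by_cases hyW : y ∈ W
            · by_cases hyA : y ∈ A
              · exact hin_A y hyA
              · have hyWA : y ∈ W \ A := ⟨hyW, hyA⟩
                by_cases hybig : 3 ≤ (comp G (W \ A) y).ncard
                · exact hin_big y hyWA hybig
                by_cases hytouch : ∃ z ∈ comp G (W \ A) y, G.Adj w₁ z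
                · obtain ⟨z', hz'C, hadjz'⟩ := hytouch
                  exact free_small hAW hyWA (by omega) hz'C hadjz' hsubBA
                    y (mem_comp_self hyWA)
                push_neg at hytouch
                by_cases hyw0 : ∃ t ∈ comp G (W \ A) y, G.Adj w₀ t
                · obtain ⟨t, htC, hadjt⟩ := hyw0
                  have hCT : comp G (W \ A) y = T := by
                    rcases hfront' t hadjt ((comp_subset.trans Set.diff_subset) htC)
                      with h | h | htT
                    · exact absurd hw₁A (h ▸ (comp_subset htC)).2
                    · exact absurd hw₂A (h ▸ (comp_subset htC)).2
                    · exact (comps_disjoint htC htT).trans hTdef.symm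
                  exact hTcl ⟨hCT ▸ (by omega), hCT ▸ hytouch, t, hCT ▸ htC, hadjt⟩
                    y (hCT ▸ mem_comp_self hyWA)
                · push_neg at hyw0
                  have hyU : y ∈ U₂ := ⟨hyWA, ⟨by omega, hytouch⟩, hyw0⟩
                  exact absurd (huniq y hyU) hyu
            · exact hin_c y hyW
        intro u huW
        by_cases huA : u ∈ A
        · exact .init u (Or.inl (Or.inr huA))
        · exact hhandle u ⟨huW, huA⟩
      -- now build hTcl, possibly diverting to case C3
      by_cases hTbad : T.ncard ≤ 2 ∧ (∀ z ∈ T, ¬ G.Adj w₁ z) ∧ ∃ y ∈ T, G.Adj w₀ y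
      · obtain ⟨hT2, hTnow₁, y₀, hy₀T, hy₀adj⟩ := hTbad
        have hTpos : 0 < T.ncard := (Set.ncard_pos (Set.toFinite _)).2 ⟨w₃, hw₃T⟩
        rcases Nat.lt_or_ge T.ncard 2 with hT1 | hT2'
        · -- T is a singleton {w₃}
          have hTsing : T = {w₃} := by
            obtain ⟨c, hc⟩ := (Set.ncard_eq_one (s := T)).1 (by omega)
            rw [hc] at hw₃T ⊢
            rw [Set.mem_singleton_iff.1 hw₃T]
          have hy₀ : y₀ = w₃ := by rw [hTsing] at hy₀T; exact hy₀T
          rw [hy₀] at hy₀adj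
          apply C5core
          intro _ x hxT
          have hx : x = w₃ := by rw [hTsing] at hxT; exact hxT
          have hadjx : G.Adj w₀ x := by rw [hx]; exact hy₀adj
          refine .force w₀ x (hin_A w₀ hw₀A) hw₀ hadjx ?_
          intro t ht htx
          by_cases htW : t ∈ W
          · rcases hfront' t ht htW with h | h | htT
            · exact hin_A t (by rw [h]; exact hw₁A)
            · exact hin_A t (by rw [h]; exact hw₂A)
            · rw [hTsing] at htT
              exact absurd (htT.trans hx.symm) htx
          · exact hin_c t htW
        · -- T is a pair
          have hT2'' : T.ncard = 2 := by omega
          obtain ⟨a, b, hab_ne, hTab, hab⟩ := comp_pair (w := w₃) hT2''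
          rw [← hTdef] at hTab
          by_cases hC3 : G.Adj w₀ a ∧ G.Adj w₀ b
          · -- CASE C3 : v = w₀, R = {w₀, a, b}
            have haT : a ∈ T := by rw [hTab]; exact Set.mem_insert _ _
            have hbT : b ∈ T := by rw [hTab]; exact Set.mem_insert_iff.2 (Or.inr rfl)
            have haWA : a ∈ W \ A := hTsub haT
            have hbWA : b ∈ W \ A := hTsub hbT
            set R : Set V := {w₀, a, b} with hR
            have hw₀R : w₀ ∈ R := by rw [hR]; exact Set.mem_insert _ _
            have haR : a ∈ R := by rw [hR]; simp
            have hbR : b ∈ R := by rw [hR]; simp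
            have hRW : R ⊆ W := by
              rintro t (rfl | rfl | rfl)
              exacts [hw₀, haWA.1, hbWA.1]
            have hRcard : 3 ≤ R.ncard := by
              rw [hR, Set.ncard_insert_of_notMem (by
                  rintro (rfl | rfl)
                  exacts [haWA.2 hw₀A, hbWA.2 hw₀A]) (Set.toFinite _),
                Set.ncard_insert_of_notMem (by simpa using hab_ne) (Set.toFinite _),
                Set.ncard_singleton]
            have hw₁R : w₁ ∉ R := by
              rintro (h' | h' | h')
              · exact ne01 h'.symm
              · exact haWA.2 (h' ▸ hw₁A)
              · exact hbWA.2 (h' ▸ hw₁A)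
            have hforce0 : ∀ u ∈ R, ZFCIn G W (Wᶜ ∪ closedNbhd G {w₀}) u := by
              rintro u (rfl | rfl | rfl)
              · exact .init u (Or.inr (mem_closedNbhd_self rfl))
              · exact .init u (Or.inr (mem_closedNbhd_adj rfl hC3.1))
              · exact .init u (Or.inr (mem_closedNbhd_adj rfl hC3.2))
            refine ⟨w₀, R, hw₀R, hRW, hRcard, hforce0, ?_⟩
            intro u huW
            by_cases huR : u ∈ R
            · exact .init u (Or.inl (Or.inr huR))
            · have hu' : u ∈ W \ R := ⟨huW, huR⟩
              by_cases hbig : 3 ≤ (comp G (W \ R) u).ncard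
              · exact .init u (Or.inr ⟨hu', hbig⟩)
              · obtain ⟨z, hzC, x, hxR, hadjzx⟩ := comp_touch hconn hRW hw₀R hu'
                have hzWR : z ∈ W \ R := comp_subset hzC
                have free : ∀ z' ∈ comp G (W \ R) u, G.Adj w₀ z' →
                    ZFCIn G W (Wᶜ ∪ closedNbhd G {w₀} ∪ R ∪
                      {x | x ∈ W \ R ∧ 3 ≤ (comp G (W \ R) x).ncard}) u := by
                  intro z' hz'C hadj'
                  exact free_small hRW hu' (by omega) hz'C hadj'
                    (fun t ht => Or.inl ht) u (mem_comp_self hu')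
                have hattach : ∀ c, c ∈ T → G.Adj z c →
                    ZFCIn G W (Wᶜ ∪ closedNbhd G {w₀} ∪ R ∪
                      {x | x ∈ W \ R ∧ 3 ≤ (comp G (W \ R) x).ncard}) u := by
                  intro c hcT hadjzc
                  by_cases hzA : z ∈ A
                  · rcases hzA with h | h | h
                    · exact absurd (show z ∈ R from by rw [h]; exact hw₀R) hzWR.2
                    · exact absurd (h ▸ hadjzc) (hTnow₁ c hcT)
                    · have hw₁C : w₁ ∈ comp G (W \ R) u :=
                        comp_closed hzC (show G.Adj z w₁ from by rw [h]; exact hadj12.symm)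
                          ⟨hw₁, hw₁R⟩
                      exact free w₁ hw₁C hadj01
                  · have hzT : z ∈ T := comp_closed hcT hadjzc.symm ⟨hzWR.1, hzA⟩
                    have hzR : z ∈ R := by
                      rw [hTab] at hzT
                      rcases hzT with h | h
                      · rw [h]; exact haR
                      · rw [h]; exact hbR
                    exact absurd hzR hzWR.2
                rcases hxR with h | h | h
                · exact free z hzC (show G.Adj w₀ z from by rw [← h]; exact hadjzx.symm)
                · exact hattach a haT (by rw [← h]; exact hadjzx)
                · exact hattach b hbT (by rw [← h]; exact hadjzx)
          · -- T pair, not both ends adjacent to w₀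
            apply C5core
            intro _
            -- exactly one vertex of T is adjacent to w₀
            have key : ∀ y₁ y₂ : V, T = {y₁, y₂} → G.Adj y₁ y₂ → G.Adj w₀ y₁ →
                ¬ G.Adj w₀ y₂ → ∀ x ∈ T, ZFCIn G W BA x := by
              intro y₁ y₂ hT12 hadj12' hadjy₁ hnadjy₂ x hxT
              have hy₁T : y₁ ∈ T := by rw [hT12]; exact Set.mem_insert _ _
              have hy₁W : y₁ ∈ W := (hTsub hy₁T).1
              have step1 : ZFCIn G W BA y₁ := by
                refine .force w₀ y₁ (hin_A w₀ hw₀A) hw₀ hadjy₁ ?_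
                intro t ht hty₁
                by_cases htW : t ∈ W
                · rcases hfront' t ht htW with h | h | htT
                  · exact hin_A t (by rw [h]; exact hw₁A)
                  · exact hin_A t (by rw [h]; exact hw₂A)
                  · rw [hT12] at htT
                    rcases htT with h | h
                    · exact absurd h hty₁
                    · exact absurd (show G.Adj w₀ y₂ from by rw [← h]; exact ht) hnadjy₂
                · exact hin_c t htW
              have step2 : ZFCIn G W BA y₂ := by
                refine .force y₁ y₂ step1 hy₁W hadj12' ?_
                intro t ht hty₂
                by_cases htW : t ∈ W
                · by_cases htA : t ∈ A
                  · exact hin_A t htA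
                  · have htT : t ∈ T := comp_closed hy₁T ht ⟨htW, htA⟩
                    rw [hT12] at htT
                    rcases htT with h | h
                    · exact absurd (show G.Adj y₁ y₁ from by rw [← h] at ht ⊢; exact ht)
                        (G.irrefl)
                    · exact absurd h hty₂
                · exact hin_c t htW
              rw [hT12] at hxT
              rcases hxT with h | h
              · exact h ▸ step1
              · exact h ▸ step2
            rw [hTab] at hy₀T
            rcases hy₀T with rfl | rfl
            · have hnb : ¬ G.Adj w₀ b := fun h => hC3 ⟨hy₀adj, h⟩
              exact key y₀ b hTab hab hy₀adj hnb
            · have hna : ¬ G.Adj w₀ a := fun h => hC3 ⟨h, hy₀adj⟩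
              exact key y₀ a (hTab.trans (Set.pair_comm a y₀)) hab.symm hy₀adj hna
      · exact C5core (fun h => absurd h hTbad)


theorem main : ∀ (n : ℕ) (W X : Set V), W.ncard ≤ n → X ⊆ W → ConnIn G W →
    3 ≤ W.ncard + 2 * X.ncard →
    ∃ S, X ⊆ S ∧ S ⊆ W ∧ 3 * S.ncard ≤ W.ncard + 2 * X.ncard ∧
      ∀ v ∈ W, ZFCIn G W (Wᶜ ∪ closedNbhd G S) v := by
  intro n
  induction n with
  | zero =>
    intro W X hWn hXW _ h3
    have hW0 : W.ncard = 0 := Nat.le_zero.1 hWn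
    have hX0 : X.ncard = 0 := Nat.le_zero.1 (hW0 ▸ Set.ncard_le_ncard hXW (Set.toFinite _))
    omega
  | succ n ih =>
    intro W X hWn hXW hconn h3
    by_cases hX : X.Nonempty
    · -- Case A : X nonempty, take R = S₀ = X
      have hXfin : X.Finite := Set.toFinite _
      have hXpos : 0 < X.ncard := (Set.ncard_pos hXfin).2 hX
      refine assembly (le_refl X) (le_refl X) hXW (by omega) ?_ ?_ ?_
      · -- hIH
        intro u hu h3C
        have hWX : (W \ X).ncard + X.ncard = W.ncard :=
          Set.ncard_diff_add_ncard_of_subset hXW (Set.toFinite _)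
        have hCW : (comp G (W \ X) u).ncard ≤ (W \ X).ncard :=
          Set.ncard_le_ncard comp_subset (Set.toFinite _)
        obtain ⟨S, _, hS2, hS3, hS4⟩ := ih (comp G (W \ X) u) ∅ (by omega)
          (Set.empty_subset _) connIn_comp (by simpa using h3C)
        refine ⟨S, hS2, by simpa using hS3, hS4⟩
      · -- hforce0
        intro v hv
        exact .init v (Or.inr (mem_closedNbhd_self hv))
      · -- hend
        intro v hv
        by_cases hvX : v ∈ X
        · exact .init v (Or.inl (Or.inl (Or.inr (mem_closedNbhd_self hvX))))
        · have hvWX : v ∈ W \ X := ⟨hv, hvX⟩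
          by_cases hbig : 3 ≤ (comp G (W \ X) v).ncard
          · exact .init v (Or.inr ⟨hvWX, hbig⟩)
          · obtain ⟨z, hzC, x, hxX, hadj⟩ := comp_touch hconn hXW hX.some_mem hvWX
            have hzN : z ∈ closedNbhd G X := mem_closedNbhd_adj hxX hadj.symm
            have hCfin : (comp G (W \ X) v).Finite := Set.toFinite _
            have hCpos : 0 < (comp G (W \ X) v).ncard :=
              (Set.ncard_pos hCfin).2 ⟨v, mem_comp_self hvWX⟩
            have hzinit : ZFCIn G W (Wᶜ ∪ closedNbhd G X ∪ X ∪
                {x | x ∈ W \ X ∧ 3 ≤ (comp G (W \ X) x).ncard}) z :=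
              .init z (Or.inl (Or.inl (Or.inr hzN)))
            rcases Nat.lt_or_ge (comp G (W \ X) v).ncard 2 with h1 | h2
            · -- singleton component
              have h1' : (comp G (W \ X) v).ncard = 1 := by omega
              obtain ⟨c, hc⟩ := Set.ncard_eq_one.1 h1'
              have hvz : v = z := by
                have hv' : v ∈ comp G (W \ X) v := mem_comp_self hvWX
                rw [hc] at hv' hzC
                simp only [Set.mem_singleton_iff] at hv' hzC
                rw [hv', ← hzC]
              exact hvz ▸ hzinit
            · -- pair component
              have h2' : (comp G (W \ X) v).ncard = 2 := by omega
              obtain ⟨a, b, hne, hC, hab⟩ := comp_pair h2'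
              have hv' : v ∈ comp G (W \ X) v := mem_comp_self hvWX
              by_cases hvz : v = z
              · exact hvz ▸ hzinit
              · -- v is the other endpoint; z forces v
                have hzv : G.Adj z v := by
                  rw [hC] at hv' hzC
                  rcases hv' with rfl | rfl <;> rcases hzC with rfl | rfl
                  · exact absurd rfl hvz
                  · exact hab.symm
                  · exact hab
                  · exact absurd rfl hvz
                refine .force z v hzinit (((Set.diff_subset).trans (le_refl W)) hzC.mem_right) hzv ?_
                intro y hy hyv
                by_cases hyW : y ∈ W
                · by_cases hyX : y ∈ X
                  · exact .init y (Or.inl (Or.inr hyX))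
                  · have hyC : y ∈ comp G (W \ X) v := comp_closed hzC hy ⟨hyW, hyX⟩
                    rw [hC] at hyC hzC hv'
                    have hyz : y = z := by
                      rcases hv' with rfl | rfl
                      · -- v = a
                        have hy' : y = b := by
                          rcases hyC with h | h
                          · exact absurd h hyv
                          · exact h
                        have hz' : z = b := by
                          rcases hzC with h | h
                          · exact absurd h.symm hvz
                          · exact h
                        rw [hy', hz']
                      · -- v = b
                        have hy' : y = a := by
                          rcases hyC with h | h
                          · exact h
                          · exact absurd h hyv
                        have hz' : z = a := by
                          rcases hzC with h | h
                          · exact h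
                          · exact absurd h.symm hvz
                        rw [hy', hz']
                    exact absurd (hyz ▸ hy) (G.irrefl)
                · exact .init y (Or.inl (Or.inl (Or.inl hyW)))
    · -- Case B : X = ∅
      have hX0 : X = ∅ := Set.not_nonempty_iff_eq_empty.1 hX
      subst hX0
      have h3W : 3 ≤ W.ncard := by simpa using h3
      obtain ⟨v, R, hvR, hRW, hR3, hforce0, hend⟩ := selection hconn h3W
      refine assembly (Set.empty_subset _) (Set.singleton_subset_iff.2 hvR) hRW
        (by simpa [Set.ncard_singleton] using hR3) ?_ hforce0 hend
      intro u hu h3C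
      have hWR : (W \ R).ncard + R.ncard = W.ncard :=
        Set.ncard_diff_add_ncard_of_subset hRW (Set.toFinite _)
      have hCW : (comp G (W \ R) u).ncard ≤ (W \ R).ncard :=
        Set.ncard_le_ncard comp_subset (Set.toFinite _)
      obtain ⟨S, _, hS2, hS3, hS4⟩ := ih (comp G (W \ R) u) ∅ (by omega)
        (Set.empty_subset _) connIn_comp (by simpa using h3C)
      exact ⟨S, hS2, by simpa using hS3, hS4⟩

lemma reach_univ {u v : V} (h : G.Reachable u v) : Reach G Set.univ u v := by
  obtain ⟨p⟩ := h
  induction p with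
  | nil => exact .refl (Set.mem_univ _)
  | cons h p ih =>
    exact Reach.trans (.tail (.refl (Set.mem_univ _)) h (Set.mem_univ _)) ih

end Aux


open RPD

theorem stmt8 {V : Type*} [Fintype V] (G : SimpleGraph V) (hconn : G.Connected)
    (hn : 3 ≤ Fintype.card V) (X : Set V) :
    pdNum G X ≤ (Fintype.card V + 2 * X.ncard) / 3 := by
  have hconn' : Aux.ConnIn G Set.univ := fun u _ v _ => Aux.reach_univ (hconn.preconnected u v)
  obtain ⟨S, hXS, _, hcard, hforce⟩ := Aux.main (G := G) (Fintype.card V) Set.univ X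
    (by rw [Set.ncard_univ, Nat.card_eq_fintype_card]) (Set.subset_univ X) hconn'
    (by rw [Set.ncard_univ, Nat.card_eq_fintype_card]; omega)
  have hPDS : IsPDS G S := by
    intro v
    have h := (hforce v (Set.mem_univ v)).toZFC
    simpa only [Set.compl_univ, Set.empty_union] using h
  refine le_trans (Nat.sInf_le ⟨S, hXS, hPDS, rfl⟩) ?_
  rw [Nat.le_div_iff_mul_le (by norm_num : 0 < 3)]
  rw [Set.ncard_univ, Nat.card_eq_fintype_card] at hcard
  omega
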